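/- The function H(x) := cos x - sin²x/cos x - sin 2x · log((1+sin x)/cos x) satisfies H'(x) < -sin x < 0 for all x in (0, x_root), where x_root is the unique root of φ_even(x) = 1 - sin x log((1+sin x)/cos x) in (0, π/2). Since H(0⁺) = 1 > 0 and H(x_root) = -cos x_root - sin²x_root/cos x_root < 0, H has a unique root x_balanced in (0, x_root). -/

import Mathlib

open Real Set

/-- φ_even(x) = 1 - sin x · log((1+sin x)/cos x). -/
noncomputable def phiEven (x : ℝ) : ℝ := 1 - sin x * log ((1 + sin x) / cos x)

/-- H(x) = 2ĥ(x) = cos x - sin²x/cos x - sin 2x · log((1+sin x)/cos x). -/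
noncomputable def Hbal (x : ℝ) : ℝ :=
  cos x - sin x^2 / cos x - sin (2*x) * log ((1 + sin x) / cos x)

lemma one_add_sin_pos {x : ℝ} (hc : 0 < cos x) : 0 < 1 + sin x := by
  nlinarith [sin_sq_add_cos_sq x, neg_one_le_sin x]

lemma hasDerivAt_L {x : ℝ} (hc : 0 < cos x) :
    HasDerivAt (fun y => log ((1 + sin y) / cos y)) (1 / cos x) x := by
  have hs : 0 < 1 + sin x := one_add_sin_pos hc
  have h1 : HasDerivAt (fun y => (1 + sin y) / cos y)
      (((0 + cos x) * cos x - (1 + sin x) * (-sin x)) / (cos x)^2) x :=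
    ((hasDerivAt_const x 1).add (hasDerivAt_sin x)).div (hasDerivAt_cos x) hc.ne'
  have h2 := h1.log (by positivity : ((1 + sin x)/cos x) ≠ 0)
  convert h2 using 1
  have hpy := sin_sq_add_cos_sq x
  field_simp
  nlinarith [hpy]

lemma hasDerivAt_Hbal {x : ℝ} (hc : 0 < cos x) :
    HasDerivAt Hbal
      (-5*sin x - sin x^3/cos x^2 - 2*cos (2*x) * log ((1+sin x)/cos x)) x := by
  have hL := hasDerivAt_L hc
  have h1 : HasDerivAt (fun y => sin y ^ 2 / cos y)
      (((2:ℕ) * sin x ^ 1 * cos x * cos x - sin x ^ 2 * (-sin x)) / (cos x)^2) x :=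
    ((hasDerivAt_sin x).pow 2).div (hasDerivAt_cos x) hc.ne'
  have h2 : HasDerivAt (fun y => sin (2*y)) (cos (2*x) * 2) x :=
    (hasDerivAt_sin (2*x)).comp x (by simpa using (hasDerivAt_id x).const_mul 2)
  have h3 := h2.mul hL
  have h4 := ((hasDerivAt_cos x).sub h1).sub h3
  refine h4.congr_deriv ?_
  rw [sin_two_mul]
  field_simp
  ring


/-- H'(x) < -sin x < 0 on (0, x_root); since H(0⁺) = 1 > 0 and
H(x_root) = -cos x_root - sin²x_root/cos x_root < 0, H has a unique root
x_balanced in (0, x_root). -/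
theorem Hbal_monotone_unique_root (xroot : ℝ)
    (hxroot : xroot ∈ Ioo 0 (π/2)) (hroot : phiEven xroot = 0) :
    (∀ x ∈ Ioo 0 xroot, deriv Hbal x < -sin x ∧ (0:ℝ) < sin x) ∧
    Filter.Tendsto Hbal (nhdsWithin 0 (Ioi 0)) (nhds 1) ∧
    Hbal xroot = -cos xroot - sin xroot^2 / cos xroot ∧
    Hbal xroot < 0 ∧
    (∃! x, x ∈ Ioo 0 xroot ∧ Hbal x = 0) := by
  obtain ⟨hx0, hxp⟩ := hxroot
  have hpi : (0:ℝ) < π/2 := by positivity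
  have hcr : 0 < cos xroot := cos_pos_of_mem_Ioo ⟨by linarith [hpi, pi_pos], hxp⟩
  have hsr : 0 < sin xroot := sin_pos_of_pos_of_lt_pi hx0 (by linarith [pi_pos])
  have hLr_eq : sin xroot * log ((1 + sin xroot) / cos xroot) = 1 := by
    have := hroot; unfold phiEven at this; linarith
  -- basic facts for x in (0, xroot)
  have key : ∀ x ∈ Ioo 0 xroot, 0 < sin x ∧ 0 < cos x ∧
      0 < log ((1 + sin x) / cos x) ∧ sin x * log ((1 + sin x) / cos x) < 1 := by
    intro x ⟨hx1, hx2⟩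
    have hxp2 : x < π/2 := lt_trans hx2 hxp
    have hc : 0 < cos x := cos_pos_of_mem_Ioo ⟨by linarith [pi_pos], hxp2⟩
    have hs : 0 < sin x := sin_pos_of_pos_of_lt_pi hx1 (by linarith [pi_pos])
    have hs1 : 0 < 1 + sin x := one_add_sin_pos hc
    have hu1 : (1:ℝ) < (1 + sin x) / cos x :=
      (one_lt_div hc).2 (by nlinarith [cos_le_one x])
    have hL : 0 < log ((1 + sin x) / cos x) := log_pos hu1
    refine ⟨hs, hc, hL, ?_⟩
    -- sin x * L x < sin xroot * L xroot = 1
    have hslt : sin x < sin xroot := by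
      apply strictMonoOn_sin ⟨by linarith, le_of_lt hxp2⟩
        ⟨by linarith, le_of_lt hxp⟩ hx2
    have hclt : cos xroot < cos x := by
      apply strictAntiOn_cos ⟨le_of_lt hx1, by linarith [pi_pos]⟩
        ⟨by linarith, by linarith [pi_pos]⟩ hx2
    have hult : (1 + sin x) / cos x < (1 + sin xroot) / cos xroot := by
      rw [div_lt_div_iff₀ hc hcr]
      nlinarith
    have hLlt : log ((1 + sin x) / cos x) < log ((1 + sin xroot) / cos xroot) :=
      log_lt_log (by positivity) hult
    calc sin x * log ((1 + sin x) / cos x)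
        < sin xroot * log ((1 + sin xroot) / cos xroot) :=
          mul_lt_mul hslt (le_of_lt hLlt) hL (le_of_lt hsr)
      _ = 1 := hLr_eq
  -- part 1: derivative bound
  have part1 : ∀ x ∈ Ioo 0 xroot, deriv Hbal x < -sin x ∧ (0:ℝ) < sin x := by
    intro x hx
    obtain ⟨hs, hc, hL, hsl⟩ := key x hx
    refine ⟨?_, hs⟩
    rw [(hasDerivAt_Hbal hc).deriv]
    have hpy := sin_sq_add_cos_sq x
    have hc2 : cos (2*x) = 1 - 2 * sin x ^ 2 := by
      rw [cos_two_mul]; nlinarith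
    rw [hc2]
    have ht : 0 < sin x^3 / cos x^2 := by positivity
    nlinarith [mul_pos hs (sub_pos.2 hsl)]
  refine ⟨part1, ?_, ?_, ?_, ?_⟩
  -- limit at 0+
  · have hcont : ContinuousAt Hbal 0 := by
      have h1 : ContinuousAt (fun y => log ((1 + sin y) / cos y)) 0 :=
        ((continuousAt_const.add Real.continuous_sin.continuousAt).div
          Real.continuous_cos.continuousAt (by norm_num)).log (by norm_num)
      have : ContinuousAt (fun y => cos y - sin y^2/cos y - sin (2*y) * log ((1+sin y)/cos y)) 0 := by
        apply ContinuousAt.sub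
        · exact Real.continuous_cos.continuousAt.sub
            (((Real.continuous_sin.pow 2).continuousAt).div
              Real.continuous_cos.continuousAt (by norm_num))
        · exact ((Real.continuous_sin.comp (continuous_const.mul continuous_id)).continuousAt).mul h1
      exact this
    have h0 : Hbal 0 = 1 := by simp [Hbal]
    have := hcont.tendsto
    rw [h0] at this
    exact this.mono_left nhdsWithin_le_nhds
  -- value at xroot
  · have hLr : log ((1 + sin xroot) / cos xroot) = 1 / sin xroot := by
      field_simp; linarith [hLr_eq]
    unfold Hbal
    rw [hLr, sin_two_mul]
    field_simp
    ring
  -- Hbal xroot < 0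
  · have hLr : log ((1 + sin xroot) / cos xroot) = 1 / sin xroot := by
      field_simp; linarith [hLr_eq]
    unfold Hbal
    rw [hLr, sin_two_mul]
    have h1 : 0 < sin xroot^2 / cos xroot := by positivity
    have : 2 * sin xroot * cos xroot * (1 / sin xroot) = 2 * cos xroot := by
      field_simp
    rw [this]
    nlinarith
  -- existence and uniqueness
  · have hcontIcc : ContinuousOn Hbal (Icc 0 xroot) := by
      intro y hy
      have hc : 0 < cos y := cos_pos_of_mem_Ioo
        ⟨by linarith [pi_pos, hy.1], lt_of_le_of_lt hy.2 hxp⟩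
      exact (hasDerivAt_Hbal hc).continuousAt.continuousWithinAt
    have hanti : StrictAntiOn Hbal (Icc 0 xroot) := by
      apply strictAntiOn_of_deriv_neg (convex_Icc _ _) hcontIcc
      intro x hx
      rw [interior_Icc] at hx
      obtain ⟨h1, h2⟩ := part1 x hx
      linarith
    have h0 : Hbal 0 = 1 := by simp [Hbal]
    have hHr : Hbal xroot < 0 := by
      have hLr : log ((1 + sin xroot) / cos xroot) = 1 / sin xroot := by
        field_simp; linarith [hLr_eq]
      unfold Hbal
      rw [hLr, sin_two_mul]
      have h1 : 0 < sin xroot^2 / cos xroot := by positivity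
      have : 2 * sin xroot * cos xroot * (1 / sin xroot) = 2 * cos xroot := by
        field_simp
      rw [this]
      nlinarith
    have hmem : (0:ℝ) ∈ Ioo (Hbal xroot) (Hbal 0) := by
      rw [h0]; exact ⟨hHr, by norm_num⟩
    obtain ⟨x, hxI, hxv⟩ := intermediate_value_Ioo' (le_of_lt hx0) hcontIcc hmem
    refine ⟨x, ⟨hxI, hxv⟩, ?_⟩
    rintro y ⟨hyI, hyv⟩
    have := hanti.injOn (Ioo_subset_Icc_self hyI) (Ioo_subset_Icc_self hxI)
      (by rw [hxv, hyv])
    exact this
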